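/- Let D ≥ 1 be an integer and let Q ∈ 𝒬(ℝ⁺) satisfy Q(0) = 0 and ∫_0^∞ x^D dQ(x) < ∞. Define F : ℝ → ℝ by D!·F(x) = ∫_0^∞ ( u^D − (u−x)^D · 1{u > x} ) dQ(u) for x ≥ 0 and F(x) = 0 for x < 0. Then F ∈ 𝒬^D(ℝ⁺); moreover (−1)^{D+1} F_+^{(D)}(x) = ∫_0^∞ 1{u > x} dQ(u) and (−1)^D [F_+^{(D)}(x) − F_+^{(D)}(0)] = Q(x) for all x ≥ 0. -/

import Mathlib

open MeasureTheory Filter Set Topology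
open scoped ENNReal

/-- The iterated (right) derivative: `rderiv F j` is the `j`-th order right derivative of `F`,
where the right derivative at `x` is the derivative within `Set.Ici x` at `x`. -/
noncomputable def rderiv (F : ℝ → ℝ) : ℕ → ℝ → ℝ
  | 0 => F
  | j + 1 => fun x => derivWithin (rderiv F j) (Set.Ici x) x

/-- A (not necessarily probability) distribution function on `[a,∞)`: nonnegative,
nondecreasing and right-continuous on `[a,∞)`, bounded, and extended by `0` on `(-∞,a)`.
This is membership in `𝒬[a,∞)` (and `𝒬(ℝ⁺)` when `a = 0`). -/
structure MemQ (a : ℝ) (F : ℝ → ℝ) : Prop where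
  zero : ∀ x : ℝ, x < a → F x = 0
  nonneg : ∀ x : ℝ, 0 ≤ F x
  mono : MonotoneOn F (Set.Ici a)
  right_cont : ∀ x ∈ Set.Ici a, ContinuousWithinAt F (Set.Ici x) x
  bddAbove : BddAbove (Set.range F)

/-- Membership in `𝒬^D[a,∞)`: a bounded distribution function on `[a,∞)` that is `D-1` times
differentiable on `[a,∞)` (two-sided derivatives at interior points, right derivatives at the
boundary), whose `D`-th order right derivative exists (and is finite) on `[a,∞)`
and is monotone there. -/
def MemQD (D : ℕ) (a : ℝ) (F : ℝ → ℝ) : Prop :=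
  MemQ a F ∧
  (∀ j < D, ∀ x ∈ Set.Ici a, HasDerivWithinAt (rderiv F j) (rderiv F (j + 1) x) (Set.Ici x) x) ∧
  (∀ j : ℕ, j + 1 < D → ∀ x ∈ Set.Ioi a, HasDerivAt (rderiv F j) (rderiv F (j + 1) x) x) ∧
  (MonotoneOn (rderiv F D) (Set.Ici a) ∨ AntitoneOn (rderiv F D) (Set.Ici a))

/-- The signed integral `∫ f dμ` with values in the extended reals, defined as the difference
of the lower integrals of the positive and negative parts of `f`. -/
noncomputable def eInt (f : ℝ → ℝ) (μ : Measure ℝ) : EReal :=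
  ((∫⁻ x, ENNReal.ofReal (f x) ∂μ : ℝ≥0∞) : EReal)
    - ((∫⁻ x, ENNReal.ofReal (-(f x)) ∂μ : ℝ≥0∞) : EReal)

/-- Iterated antiderivatives vanishing at `0`: `antider g 0 = g` and
`antider g (d+1) x = ∫_0^x antider g d`. So `antider g d = g^{(-d)}`. -/
noncomputable def antider (g : ℝ → ℝ) : ℕ → ℝ → ℝ
  | 0 => g
  | d + 1 => fun x => ∫ u in (0:ℝ)..x, antider g d u

set_option maxHeartbeats 1000000

namespace Stmt9Aux


noncomputable def Gm (ν : Measure ℝ) (j : ℕ) (x : ℝ) : ℝ :=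
  ∫ u in Set.Ioi x, (u - x) ^ j ∂ν

variable {ν : Measure ℝ} {D : ℕ}

lemma ae_pos (h0 : ν (Set.Iic 0) = 0) : ∀ᵐ u ∂ν, (0:ℝ) < u := by
  rw [ae_iff]
  convert h0 using 2
  ext u; simp [not_lt]

lemma gm_integrand_integrable [IsFiniteMeasure ν] (h0 : ν (Set.Iic 0) = 0)
    (hDint : Integrable (fun u : ℝ => u ^ D) ν) {j : ℕ} (hj : j ≤ D) (x : ℝ) :
    Integrable (fun u : ℝ => (u - x) ^ j) ν := by
  have hb : Integrable (fun u : ℝ => (2*(1+|x|)) ^ j * (1 + u ^ D)) ν :=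
    (((integrable_const (1:ℝ)).add hDint).const_mul _)
  refine hb.mono ((continuous_id.sub continuous_const).pow j).aestronglyMeasurable ?_
  filter_upwards [ae_pos h0] with u hu
  rw [Real.norm_eq_abs, Real.norm_eq_abs, abs_pow]
  have hm1 : (1:ℝ) ≤ max 1 u := le_max_left _ _
  have hmu : u ≤ max 1 u := le_max_right _ _
  have h1 : |u - x| ≤ 2*(1+|x|) * max 1 u := by
    have h2 : |u - x| ≤ |u| + |x| := abs_sub _ _
    rw [abs_of_nonneg hu.le] at h2
    nlinarith [abs_nonneg x]
  have h3 : (max 1 u) ^ j ≤ 1 + u ^ D := by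
    rcases le_total u 1 with h | h
    · rw [max_eq_left h]
      have := pow_nonneg hu.le D
      simp only [one_pow]
      linarith
    · rw [max_eq_right h]
      have := pow_le_pow_right₀ h hj
      linarith
  calc |u - x| ^ j ≤ (2*(1+|x|) * max 1 u) ^ j := pow_le_pow_left₀ (abs_nonneg _) h1 j
    _ = (2*(1+|x|)) ^ j * (max 1 u) ^ j := mul_pow _ _ _
    _ ≤ (2*(1+|x|)) ^ j * (1 + u ^ D) := by
        refine mul_le_mul_of_nonneg_left h3 (pow_nonneg (by positivity) _)
    _ ≤ |(2*(1+|x|)) ^ j * (1 + u ^ D)| := le_abs_self _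

lemma gm_nonneg (j : ℕ) (x : ℝ) : 0 ≤ Gm ν j x :=
  setIntegral_nonneg measurableSet_Ioi fun u hu =>
    pow_nonneg (sub_nonneg.2 (le_of_lt hu)) _

lemma gm_antitone [IsFiniteMeasure ν] (h0 : ν (Set.Iic 0) = 0)
    (hDint : Integrable (fun u : ℝ => u ^ D) ν) {j : ℕ} (hj : j ≤ D) :
    Antitone (Gm ν j) := by
  intro a b hab
  have hIa : IntegrableOn (fun u => (u - a) ^ j) (Set.Ioi a) ν :=
    (gm_integrand_integrable h0 hDint hj a).integrableOn
  have h1 : Gm ν j b ≤ ∫ u in Set.Ioi b, (u - a) ^ j ∂ν := by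
    refine setIntegral_mono_on (gm_integrand_integrable h0 hDint hj b).integrableOn
      (gm_integrand_integrable h0 hDint hj a).integrableOn measurableSet_Ioi ?_
    intro u hu
    exact pow_le_pow_left₀ (sub_nonneg.2 (le_of_lt hu)) (by linarith) j
  have h2 : ∫ u in Set.Ioi b, (u - a) ^ j ∂ν ≤ Gm ν j a := by
    refine setIntegral_mono_set hIa ?_ (HasSubset.Subset.eventuallyLE (Ioi_subset_Ioi hab))
    exact (ae_restrict_iff' measurableSet_Ioi).2
      (ae_of_all _ fun u hu => pow_nonneg (sub_nonneg.2 hu.le) j)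
  exact h1.trans h2

lemma gm_measurable [IsFiniteMeasure ν] (h0 : ν (Set.Iic 0) = 0)
    (hDint : Integrable (fun u : ℝ => u ^ D) ν) {j : ℕ} (hj : j ≤ D) :
    Measurable (Gm ν j) :=
  (gm_antitone h0 hDint hj).measurable


lemma gm_integrand_nonneg_ae (j : ℕ) (x : ℝ) :
    0 ≤ᵐ[ν.restrict (Set.Ioi x)] fun u => (u - x) ^ j :=
  (ae_restrict_iff' measurableSet_Ioi).2
    (ae_of_all _ fun u hu => pow_nonneg (sub_nonneg.2 hu.le) j)

lemma gm_lintegral_succ [IsFiniteMeasure ν] (h0 : ν (Set.Iic 0) = 0)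
    (hDint : Integrable (fun u : ℝ => u ^ D) ν) {j : ℕ} (hj : j + 1 ≤ D) (x : ℝ) :
    ENNReal.ofReal (Gm ν (j+1) x)
      = ((j:ℝ≥0∞)+1) * ∫⁻ t in Set.Ioi x, ENNReal.ofReal (Gm ν j t) := by
  have hjD : j ≤ D := Nat.le_of_succ_le hj
  -- rewrite LHS as a lintegral
  rw [Gm, ofReal_integral_eq_lintegral_ofReal
    (gm_integrand_integrable h0 hDint hj x).integrableOn (gm_integrand_nonneg_ae _ x)]
  -- rewrite inner Gm as lintegrals
  have hGm : ∀ t : ℝ, ENNReal.ofReal (Gm ν j t)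
      = ∫⁻ u in Set.Ioi t, ENNReal.ofReal ((u - t) ^ j) ∂ν := fun t =>
    ofReal_integral_eq_lintegral_ofReal
      (gm_integrand_integrable h0 hDint hjD t).integrableOn (gm_integrand_nonneg_ae _ t)
  simp_rw [hGm]
  -- the kernel
  set k : ℝ → ℝ → ℝ≥0∞ := fun t u =>
    if x < t ∧ t < u then ENNReal.ofReal ((u - t) ^ j) else 0 with hk
  have hswap : ∫⁻ t in Set.Ioi x, (∫⁻ u in Set.Ioi t, ENNReal.ofReal ((u - t) ^ j) ∂ν) ∂volume
      = ∫⁻ u, (∫⁻ t, k t u ∂volume) ∂ν := by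
    have h1 : ∫⁻ t in Set.Ioi x, (∫⁻ u in Set.Ioi t, ENNReal.ofReal ((u - t) ^ j) ∂ν) ∂volume
        = ∫⁻ t, (∫⁻ u, k t u ∂ν) ∂volume := by
      rw [← lintegral_indicator measurableSet_Ioi]
      refine lintegral_congr fun t => ?_
      by_cases ht : x < t
      · rw [Set.indicator_of_mem (Set.mem_Ioi.mpr ht), ← lintegral_indicator measurableSet_Ioi]
        refine lintegral_congr fun u => ?_
        by_cases htu : t < u
        · simp only [hk]
          rw [Set.indicator_of_mem (Set.mem_Ioi.mpr htu), if_pos ⟨ht, htu⟩]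
        · simp only [hk]
          rw [Set.indicator_of_notMem (by simpa using htu), if_neg (by tauto)]
      · rw [Set.indicator_of_notMem (by simpa using ht)]
        simp only [hk]
        have hz : ∀ u : ℝ, (if x < t ∧ t < u then ENNReal.ofReal ((u - t) ^ j) else 0) = 0 :=
          fun u => if_neg (by tauto)
        simp [hz]
    rw [h1]
    refine lintegral_lintegral_swap ?_
    have hmeas : Measurable (Function.uncurry k) := by
      have hset : MeasurableSet {p : ℝ × ℝ | x < p.1 ∧ p.1 < p.2} :=
        (measurableSet_lt measurable_const measurable_fst).inter
          (measurableSet_lt measurable_fst measurable_snd)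
      have : Function.uncurry k = fun p : ℝ × ℝ =>
          if x < p.1 ∧ p.1 < p.2 then ENNReal.ofReal ((p.2 - p.1) ^ j) else 0 := rfl
      rw [this]
      exact Measurable.ite hset
        (ENNReal.measurable_ofReal.comp ((measurable_snd.sub measurable_fst).pow_const j))
        measurable_const
    exact hmeas.aemeasurable
  rw [hswap]
  -- compute inner integral in t
  have hinner : ∀ u : ℝ, (∫⁻ t, k t u ∂volume)
      = Set.indicator (Set.Ioi x)
          (fun u => ENNReal.ofReal ((u - x) ^ (j+1) / ((j:ℝ)+1))) u := by
    intro u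
    have hke : (fun t => k t u)
        = Set.indicator (Set.Ioo x u) (fun t => ENNReal.ofReal ((u - t) ^ j)) := by
      funext t
      by_cases ht : x < t ∧ t < u
      · simp only [hk]
        rw [if_pos ht, Set.indicator_of_mem (Set.mem_Ioo.mpr ht)]
      · simp only [hk]
        rw [if_neg ht, Set.indicator_of_notMem (by simpa [Set.mem_Ioo] using ht)]
    rw [hke, lintegral_indicator measurableSet_Ioo]
    by_cases hxu : x < u
    · rw [Set.indicator_of_mem (Set.mem_Ioi.mpr hxu)]
      have hint : IntegrableOn (fun t => (u - t) ^ j) (Set.Ioo x u) volume :=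
        (((continuous_const.sub continuous_id).pow j).integrableOn_Icc).mono_set
          Set.Ioo_subset_Icc_self
      rw [← ofReal_integral_eq_lintegral_ofReal hint ?_]
      · congr 1
        have : ∫ t in Set.Ioo x u, (u - t) ^ j
            = ∫ t in Set.Ioc x u, (u - t) ^ j := (integral_Ioc_eq_integral_Ioo).symm
        rw [this, ← intervalIntegral.integral_of_le hxu.le]
        have := intervalIntegral.integral_comp_sub_left (a := x) (b := u)
          (fun s => s ^ j) u
        rw [this]
        simp [integral_pow]
      · refine (ae_restrict_iff' measurableSet_Ioo).2
          (ae_of_all _ fun t ht => pow_nonneg (by linarith [ht.2]) j)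
    · rw [Set.indicator_of_notMem (by simpa using hxu), Set.Ioo_eq_empty hxu,
        Measure.restrict_empty, lintegral_zero_measure]
  simp_rw [hinner]
  rw [lintegral_indicator measurableSet_Ioi, ← lintegral_const_mul]
  · refine setLIntegral_congr_fun measurableSet_Ioi (fun u hu => ?_)
    have hj1 : ((j:ℝ≥0∞)+1) = ENNReal.ofReal ((j:ℝ)+1) := by
      rw [ENNReal.ofReal_add (by positivity) zero_le_one]
      simp [ENNReal.ofReal_natCast]
    rw [hj1, ← ENNReal.ofReal_mul (by positivity)]
    congr 1
    field_simp
  · exact ENNReal.measurable_ofReal.comp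
      (((continuous_id.sub continuous_const).pow (j+1)).measurable.div_const _)


lemma gm_integrableOn_Ioi [IsFiniteMeasure ν] (h0 : ν (Set.Iic 0) = 0)
    (hDint : Integrable (fun u : ℝ => u ^ D) ν) {j : ℕ} (hj : j + 1 ≤ D) (x : ℝ) :
    IntegrableOn (Gm ν j) (Set.Ioi x) volume := by
  have hjD : j ≤ D := Nat.le_of_succ_le hj
  refine ⟨((gm_measurable h0 hDint hjD).aestronglyMeasurable), ?_⟩
  rw [hasFiniteIntegral_iff_norm]
  have hcong : ∫⁻ t in Set.Ioi x, ENNReal.ofReal ‖Gm ν j t‖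
      = ∫⁻ t in Set.Ioi x, ENNReal.ofReal (Gm ν j t) :=
    lintegral_congr fun t => by rw [Real.norm_of_nonneg (gm_nonneg j t)]
  rw [hcong]
  have h := gm_lintegral_succ h0 hDint hj x
  by_contra htop
  rw [not_lt, top_le_iff] at htop
  rw [htop, ENNReal.mul_top (by simp)] at h
  exact ENNReal.ofReal_ne_top h

lemma gm_succ_eq [IsFiniteMeasure ν] (h0 : ν (Set.Iic 0) = 0)
    (hDint : Integrable (fun u : ℝ => u ^ D) ν) {j : ℕ} (hj : j + 1 ≤ D) (x : ℝ) :
    Gm ν (j+1) x = ((j:ℝ)+1) * ∫ t in Set.Ioi x, Gm ν j t := by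
  have hnn : 0 ≤ᵐ[volume.restrict (Set.Ioi x)] Gm ν j := ae_of_all _ fun t => gm_nonneg j t
  have h := gm_lintegral_succ h0 hDint hj x
  rw [← ofReal_integral_eq_lintegral_ofReal (gm_integrableOn_Ioi h0 hDint hj x) hnn] at h
  have hj1 : ((j:ℝ≥0∞)+1) = ENNReal.ofReal ((j:ℝ)+1) := by
    rw [ENNReal.ofReal_add (by positivity) zero_le_one]
    simp [ENNReal.ofReal_natCast]
  rw [hj1, ← ENNReal.ofReal_mul (by positivity)] at h
  have hint_nn : 0 ≤ ∫ t in Set.Ioi x, Gm ν j t :=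
    integral_nonneg_of_ae hnn
  exact (ENNReal.ofReal_eq_ofReal_iff (gm_nonneg _ _)
    (mul_nonneg (by positivity) hint_nn)).1 h

lemma gm_primitive [IsFiniteMeasure ν] (h0 : ν (Set.Iic 0) = 0)
    (hDint : Integrable (fun u : ℝ => u ^ D) ν) {j : ℕ} (hj : j + 1 ≤ D) {x : ℝ}
    (hx : 0 ≤ x) :
    Gm ν (j+1) x = Gm ν (j+1) 0 - ((j:ℝ)+1) * ∫ t in (0:ℝ)..x, Gm ν j t := by
  have hI0 : IntegrableOn (Gm ν j) (Set.Ioi 0) volume := gm_integrableOn_Ioi h0 hDint hj 0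
  have hsplit : ∫ t in Set.Ioi (0:ℝ), Gm ν j t
      = (∫ t in Set.Ioc 0 x, Gm ν j t) + ∫ t in Set.Ioi x, Gm ν j t := by
    rw [← setIntegral_union (Set.Ioc_disjoint_Ioi le_rfl) measurableSet_Ioi
      (hI0.mono_set Set.Ioc_subset_Ioi_self) (gm_integrableOn_Ioi h0 hDint hj x),
      Set.Ioc_union_Ioi_eq_Ioi hx]
  rw [gm_succ_eq h0 hDint hj x, gm_succ_eq h0 hDint hj 0,
    intervalIntegral.integral_of_le hx, hsplit]
  ring

lemma gm_primitive_continuous [IsFiniteMeasure ν] (h0 : ν (Set.Iic 0) = 0)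
    (hDint : Integrable (fun u : ℝ => u ^ D) ν) {j : ℕ} (hj : j ≤ D) :
    Continuous (fun y : ℝ => ∫ t in (0:ℝ)..y, Gm ν j t) :=
  intervalIntegral.continuous_primitive
    (fun _ _ => (gm_antitone h0 hDint hj).intervalIntegrable) 0

lemma gm_continuousWithinAt [IsFiniteMeasure ν] (h0 : ν (Set.Iic 0) = 0)
    (hDint : Integrable (fun u : ℝ => u ^ D) ν) {j : ℕ} (hj : j + 1 ≤ D) {x : ℝ}
    (hx : 0 ≤ x) :
    ContinuousWithinAt (Gm ν (j+1)) (Set.Ici x) x := by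
  have hc : ContinuousWithinAt
      (fun y => Gm ν (j+1) 0 - ((j:ℝ)+1) * ∫ t in (0:ℝ)..y, Gm ν j t) (Set.Ici x) x :=
    (continuous_const.sub (continuous_const.mul
      (gm_primitive_continuous h0 hDint (Nat.le_of_succ_le hj)))).continuousWithinAt
  refine hc.congr (fun y hy => ?_) ?_
  · exact gm_primitive h0 hDint hj (hx.trans hy)
  · exact gm_primitive h0 hDint hj hx

lemma gm_continuousAt [IsFiniteMeasure ν] (h0 : ν (Set.Iic 0) = 0)
    (hDint : Integrable (fun u : ℝ => u ^ D) ν) {j : ℕ} (hj : j + 1 ≤ D) {x : ℝ}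
    (hx : 0 < x) :
    ContinuousAt (Gm ν (j+1)) x := by
  have hc : ContinuousAt
      (fun y => Gm ν (j+1) 0 - ((j:ℝ)+1) * ∫ t in (0:ℝ)..y, Gm ν j t) x :=
    (continuous_const.sub (continuous_const.mul
      (gm_primitive_continuous h0 hDint (Nat.le_of_succ_le hj)))).continuousAt
  refine hc.congr ?_
  filter_upwards [eventually_gt_nhds hx] with y hy
  exact (gm_primitive h0 hDint hj hy.le).symm

lemma gm_hasDerivWithinAt [IsFiniteMeasure ν] (h0 : ν (Set.Iic 0) = 0)
    (hDint : Integrable (fun u : ℝ => u ^ D) ν) {j : ℕ} (hj : j + 1 ≤ D) {x : ℝ}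
    (hx : 0 ≤ x) (hcont : ContinuousWithinAt (Gm ν j) (Set.Ici x) x) :
    HasDerivWithinAt (Gm ν (j+1)) (-(((j:ℝ)+1) * Gm ν j x)) (Set.Ici x) x := by
  have hjD : j ≤ D := Nat.le_of_succ_le hj
  have hprim : HasDerivWithinAt (fun y => ∫ t in (0:ℝ)..y, Gm ν j t)
      (Gm ν j x) (Set.Ici x) x := by
    refine intervalIntegral.integral_hasDerivWithinAt_right
      ((gm_antitone h0 hDint hjD).intervalIntegrable) ?_
      (hcont.mono Set.Ioi_subset_Ici_self)
    exact ⟨Set.univ, Filter.univ_mem,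
      by rw [Measure.restrict_univ]
         exact (gm_measurable h0 hDint hjD).aestronglyMeasurable⟩
  have h2 : HasDerivWithinAt
      (fun y => Gm ν (j+1) 0 - ((j:ℝ)+1) * ∫ t in (0:ℝ)..y, Gm ν j t)
      (0 - ((j:ℝ)+1) * Gm ν j x) (Set.Ici x) x :=
    (hasDerivWithinAt_const x _ _).sub (hprim.const_mul _)
  have h3 : HasDerivWithinAt (Gm ν (j+1)) (0 - ((j:ℝ)+1) * Gm ν j x) (Set.Ici x) x := by
    refine h2.congr (fun y hy => gm_primitive h0 hDint hj (hx.trans hy))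
      (gm_primitive h0 hDint hj hx)
  convert h3 using 1
  ring

lemma gm_hasDerivAt [IsFiniteMeasure ν] (h0 : ν (Set.Iic 0) = 0)
    (hDint : Integrable (fun u : ℝ => u ^ D) ν) {j : ℕ} (hj : j + 1 ≤ D) {x : ℝ}
    (hx : 0 < x) (hcont : ContinuousAt (Gm ν j) x) :
    HasDerivAt (Gm ν (j+1)) (-(((j:ℝ)+1) * Gm ν j x)) x := by
  have hjD : j ≤ D := Nat.le_of_succ_le hj
  have hprim : HasDerivAt (fun y => ∫ t in (0:ℝ)..y, Gm ν j t) (Gm ν j x) x := by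
    refine intervalIntegral.integral_hasDerivAt_right
      ((gm_antitone h0 hDint hjD).intervalIntegrable) ?_ hcont
    exact ⟨Set.univ, Filter.univ_mem,
      by rw [Measure.restrict_univ]
         exact (gm_measurable h0 hDint hjD).aestronglyMeasurable⟩
  have h2 : HasDerivAt
      (fun y => Gm ν (j+1) 0 - ((j:ℝ)+1) * ∫ t in (0:ℝ)..y, Gm ν j t)
      (0 - ((j:ℝ)+1) * Gm ν j x) x :=
    (hasDerivAt_const x _).sub (hprim.const_mul _)
  have h3 : HasDerivAt (Gm ν (j+1)) (0 - ((j:ℝ)+1) * Gm ν j x) x := by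
    refine h2.congr_of_eventuallyEq ?_
    filter_upwards [eventually_gt_nhds hx] with y hy
    exact gm_primitive h0 hDint hj hy.le
  convert h3 using 1
  ring


noncomputable def psi (F : ℝ → ℝ) (ν : Measure ℝ) (E : ℕ) : ℕ → ℝ → ℝ
  | 0 => F
  | j + 1 => fun x => (-1:ℝ) ^ j * ((E - j).factorial : ℝ)⁻¹ * Gm ν (E - j) x

end Stmt9Aux

open Stmt9Aux

/-- Converse representation: if `Q ∈ 𝒬(ℝ⁺)` with `Q(0) = 0` and
`∫_0^∞ x^D dQ < ∞`, and `F` is defined by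
`D! F(x) = ∫_0^∞ (u^D - (u-x)^D 1{u > x}) dQ(u)` for `x ≥ 0` and `F(x) = 0` for `x < 0`,
then `F ∈ 𝒬^D(ℝ⁺)`, and moreover `(-1)^(D+1) F₊^(D)(x) = ∫_0^∞ 1{u > x} dQ(u)` and
`(-1)^D [F₊^(D)(x) - F₊^(D)(0)] = Q(x)` for all `x ≥ 0`. -/
theorem stmt_9 (D : ℕ) (hD : 1 ≤ D) (Q : ℝ → ℝ) (hQ : MemQ 0 Q) (hQ0 : Q 0 = 0)
    (hQm : Monotone Q)
    (hmom : ∫⁻ x in Set.Ioi (0:ℝ), ENNReal.ofReal (x ^ D) ∂hQm.stieltjesFunction.measure ≠ ⊤)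
    (F : ℝ → ℝ)
    (hFdef : ∀ x : ℝ, 0 ≤ x →
      (D.factorial : ℝ) * F x =
        ∫ u in Set.Ioi (0:ℝ),
          (u ^ D - (u - x) ^ D * (if x < u then 1 else 0)) ∂hQm.stieltjesFunction.measure)
    (hFneg : ∀ x : ℝ, x < 0 → F x = 0) :
    MemQD D 0 F ∧
    ∀ x : ℝ, 0 ≤ x →
      (-1 : ℝ) ^ (D + 1) * rderiv F D x =
        ((hQm.stieltjesFunction.measure.restrict (Set.Ioi 0)) (Set.Ioi x)).toReal ∧
      (-1 : ℝ) ^ D * (rderiv F D x - rderiv F D 0) = Q x := by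
  obtain ⟨E, rfl⟩ : ∃ E, D = E + 1 := ⟨D - 1, (Nat.succ_pred_eq_of_pos hD).symm⟩
  set μS := hQm.stieltjesFunction with hμS
  set ν : Measure ℝ := μS.measure.restrict (Set.Ioi 0) with hν
  -- the Stieltjes function agrees with Q
  have hSQ : ∀ y : ℝ, μS y = Q y := by
    intro y
    have hdef : μS y = Function.rightLim Q y := rfl
    rcases lt_or_ge y 0 with hy | hy
    · have h1 : Q y = 0 := hQ.zero y hy
      have h2 : Tendsto Q (𝓝[>] y) (𝓝 0) := by
        refine Tendsto.congr' ?_ tendsto_const_nhds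
        filter_upwards [(eventually_lt_nhds hy).filter_mono nhdsWithin_le_nhds] with z hz
        exact (hQ.zero z hz).symm
      rw [hdef, rightLim_eq_of_tendsto h2, h1]
    · have h2 : Tendsto Q (𝓝[>] y) (𝓝 (Q y)) :=
        (hQ.right_cont y hy).mono_left (nhdsWithin_mono y Set.Ioi_subset_Ici_self)
      rw [hdef, rightLim_eq_of_tendsto h2]
  set l : ℝ := ⨆ x, Q x with hl
  have htend : Tendsto Q atTop (𝓝 l) := tendsto_atTop_ciSup hQm hQ.bddAbove
  have hQle : ∀ x : ℝ, Q x ≤ l := fun x => le_ciSup hQ.bddAbove x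
  have hIoi : ∀ x : ℝ, μS.measure (Set.Ioi x) = ENNReal.ofReal (l - Q x) := by
    intro x
    have h1 : Tendsto (fun b => μS.measure (Set.Ioc x b)) atTop (𝓝 (μS.measure (Set.Ioi x))) := by
      rw [← Set.iUnion_Ioc_right]
      exact tendsto_measure_iUnion_atTop (antitone_const.Ioc monotone_id)
    have h2 : Tendsto (fun b => μS.measure (Set.Ioc x b)) atTop (𝓝 (ENNReal.ofReal (l - Q x))) := by
      simp_rw [StieltjesFunction.measure_Ioc, hSQ]
      exact ENNReal.tendsto_ofReal (htend.sub_const _)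
    exact tendsto_nhds_unique h1 h2
  haveI hfin : IsFiniteMeasure ν := by
    refine ⟨?_⟩
    rw [hν, Measure.restrict_apply_univ, hIoi 0]
    exact ENNReal.ofReal_lt_top
  have h0 : ν (Set.Iic 0) = 0 := by
    rw [hν, Measure.restrict_apply measurableSet_Iic]
    have he : Set.Iic (0:ℝ) ∩ Set.Ioi 0 = ∅ := by
      ext z
      simp only [Set.mem_inter_iff, Set.mem_Iic, Set.mem_Ioi, Set.mem_empty_iff_false, iff_false,
        not_and, not_lt]
      exact fun h => h
    rw [he, measure_empty]
  have hνIoi : ∀ x : ℝ, 0 ≤ x → ν (Set.Ioi x) = ENNReal.ofReal (l - Q x) := by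
    intro x hx
    rw [hν, Measure.restrict_apply measurableSet_Ioi,
      Set.inter_eq_self_of_subset_left (Set.Ioi_subset_Ioi hx), hIoi x]
  have hDint : Integrable (fun u : ℝ => u ^ (E+1)) ν := by
    refine ⟨(continuous_pow (E+1)).aestronglyMeasurable, ?_⟩
    rw [hasFiniteIntegral_iff_norm]
    have hcong : ∫⁻ u, ENNReal.ofReal ‖u ^ (E+1)‖ ∂ν = ∫⁻ u, ENNReal.ofReal (u ^ (E+1)) ∂ν := by
      refine lintegral_congr_ae ?_
      filter_upwards [ae_pos h0] with u hu
      rw [Real.norm_of_nonneg (pow_nonneg hu.le _)]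
    rw [hcong]
    exact lt_top_iff_ne_top.2 hmom
  have hG0 : ∀ x : ℝ, 0 ≤ x → Gm ν 0 x = l - Q x := by
    intro x hx
    have h1 : Gm ν 0 x = (ν (Set.Ioi x)).toReal := by
      rw [Gm]
      simp only [pow_zero, setIntegral_const, smul_eq_mul, mul_one, measureReal_def]
    rw [h1, hνIoi x hx, ENNReal.toReal_ofReal (sub_nonneg.2 (hQle x))]
  have hfac : (((E+1).factorial : ℕ) : ℝ) ≠ 0 :=
    Nat.cast_ne_zero.2 (Nat.factorial_ne_zero _)
  have hFeq : ∀ x : ℝ, 0 ≤ x →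
      F x = (((E+1).factorial : ℕ) : ℝ)⁻¹ * (Gm ν (E+1) 0 - Gm ν (E+1) x) := by
    intro x hx
    have h1 := hFdef x hx
    have hindic : (fun u : ℝ => (u - x)^(E+1) * (if x < u then (1:ℝ) else 0))
        = Set.indicator (Set.Ioi x) (fun u => (u - x)^(E+1)) := by
      funext u
      by_cases h : x < u
      · rw [if_pos h, Set.indicator_of_mem (Set.mem_Ioi.mpr h), mul_one]
      · rw [if_neg h, Set.indicator_of_notMem (by simpa using h), mul_zero]
    have hIb : Integrable (fun u : ℝ => (u - x)^(E+1) * (if x < u then (1:ℝ) else 0)) ν := by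
      rw [hindic]
      exact ((gm_integrand_integrable h0 hDint le_rfl x).integrableOn).integrable_indicator
        measurableSet_Ioi
    have h2 : (∫ u in Set.Ioi (0:ℝ),
        (u ^ (E+1) - (u - x) ^ (E+1) * (if x < u then (1:ℝ) else 0)) ∂μS.measure)
        = Gm ν (E+1) 0 - Gm ν (E+1) x := by
      have hres : ν.restrict (Set.Ioi 0) = ν := by
        rw [hν, Measure.restrict_restrict measurableSet_Ioi, Set.inter_self]
      have hstep : (∫ u in Set.Ioi (0:ℝ),
          (u ^ (E+1) - (u - x) ^ (E+1) * (if x < u then (1:ℝ) else 0)) ∂μS.measure)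
          = ∫ u, (u ^ (E+1) - (u - x) ^ (E+1) * (if x < u then (1:ℝ) else 0)) ∂ν := rfl
      rw [hstep, integral_sub hDint hIb, hindic, integral_indicator measurableSet_Ioi]
      have hGm0 : Gm ν (E+1) 0 = ∫ u, u ^ (E+1) ∂ν := by
        have : Gm ν (E+1) 0 = ∫ u, (u - 0) ^ (E+1) ∂(ν.restrict (Set.Ioi 0)) := rfl
        rw [this, hres]
        simp only [sub_zero]
      rw [hGm0]
      rfl
    rw [h2] at h1
    rw [inv_mul_eq_div, eq_div_iff hfac]
    linarith
  -- right continuity of Gm at every index ≤ E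
  have hRC : ∀ k : ℕ, k ≤ E → ∀ x : ℝ, 0 ≤ x → ContinuousWithinAt (Gm ν k) (Set.Ici x) x := by
    intro k hk x hx
    cases k with
    | zero =>
      have hc : ContinuousWithinAt (fun y => l - Q y) (Set.Ici x) x :=
        continuousWithinAt_const.sub (hQ.right_cont x hx)
      exact hc.congr (fun y hy => hG0 y (hx.trans hy)) (hG0 x hx)
    | succ m =>
      exact gm_continuousWithinAt h0 hDint (by omega) hx
  -- first key derivative computation (one-sided)
  have key1 : ∀ j : ℕ, j ≤ E → ∀ x : ℝ, 0 ≤ x →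
      HasDerivWithinAt (psi F ν E j) (psi F ν E (j+1) x) (Set.Ici x) x := by
    intro j hj x hx
    cases j with
    | zero =>
      have hGd : HasDerivWithinAt (Gm ν (E+1))
          (-((((E:ℝ))+1) * Gm ν E x)) (Set.Ici x) x :=
        gm_hasDerivWithinAt h0 hDint le_rfl hx (hRC E le_rfl x hx)
      have h2 : HasDerivWithinAt
          (fun y => (((E+1).factorial : ℕ) : ℝ)⁻¹ * (Gm ν (E+1) 0 - Gm ν (E+1) y))
          ((((E+1).factorial : ℕ) : ℝ)⁻¹ * (0 - -((((E:ℝ))+1) * Gm ν E x))) (Set.Ici x) x :=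
        ((hasDerivWithinAt_const x _ _).sub hGd).const_mul _
      have h3 : HasDerivWithinAt F
          ((((E+1).factorial : ℕ) : ℝ)⁻¹ * (0 - -((((E:ℝ))+1) * Gm ν E x))) (Set.Ici x) x :=
        h2.congr (fun y hy => hFeq y (hx.trans hy)) (hFeq x hx)
      show HasDerivWithinAt F ((-1:ℝ) ^ 0 * ((E - 0).factorial : ℝ)⁻¹ * Gm ν (E - 0) x)
        (Set.Ici x) x
      convert h3 using 1
      have hfs : (((E+1).factorial : ℕ) : ℝ) = ((E:ℝ)+1) * ((E.factorial : ℕ) : ℝ) := by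
        rw [Nat.factorial_succ]
        push_cast
        ring
      simp only [Nat.sub_zero, pow_zero, one_mul, hfs]
      have hE : (((E.factorial : ℕ)) : ℝ) ≠ 0 := Nat.cast_ne_zero.2 (Nat.factorial_ne_zero _)
      field_simp
      ring
    | succ i =>
      obtain ⟨k, hk⟩ : ∃ k, E - i = k + 1 := ⟨E - i - 1, by omega⟩
      have hki : E - (i+1) = k := by omega
      have hGd : HasDerivWithinAt (Gm ν (k+1))
          (-((((k:ℝ))+1) * Gm ν k x)) (Set.Ici x) x :=
        gm_hasDerivWithinAt h0 hDint (by omega) hx (hRC k (by omega) x hx)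
      show HasDerivWithinAt (fun y => (-1:ℝ) ^ i * ((E - i).factorial : ℝ)⁻¹ * Gm ν (E - i) y)
        ((-1:ℝ) ^ (i+1) * ((E - (i+1)).factorial : ℝ)⁻¹ * Gm ν (E - (i+1)) x) (Set.Ici x) x
      rw [hk, hki]
      have h2 := hGd.const_mul ((-1:ℝ) ^ i * (((k+1).factorial : ℕ) : ℝ)⁻¹)
      convert h2 using 1
      case e'_4 => rfl
      case e'_5 => rfl
      have hfs : (((k+1).factorial : ℕ) : ℝ) = ((k:ℝ)+1) * ((k.factorial : ℕ) : ℝ) := by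
        rw [Nat.factorial_succ]; push_cast; ring
      have hkk : (((k.factorial : ℕ)) : ℝ) ≠ 0 := Nat.cast_ne_zero.2 (Nat.factorial_ne_zero _)
      rw [pow_succ, hfs]
      field_simp
  -- second key derivative computation (two-sided, interior)
  have key2 : ∀ j : ℕ, j + 1 ≤ E → ∀ x : ℝ, 0 < x →
      HasDerivAt (psi F ν E j) (psi F ν E (j+1) x) x := by
    intro j hj x hx
    cases j with
    | zero =>
      obtain ⟨m, hm⟩ : ∃ m, E = m + 1 := ⟨E - 1, by omega⟩
      have hcont : ContinuousAt (Gm ν E) x := by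
        rw [hm]; exact gm_continuousAt h0 hDint (by omega) hx
      have hGd : HasDerivAt (Gm ν (E+1)) (-((((E:ℝ))+1) * Gm ν E x)) x :=
        gm_hasDerivAt h0 hDint le_rfl hx hcont
      have h2 : HasDerivAt
          (fun y => (((E+1).factorial : ℕ) : ℝ)⁻¹ * (Gm ν (E+1) 0 - Gm ν (E+1) y))
          ((((E+1).factorial : ℕ) : ℝ)⁻¹ * (0 - -((((E:ℝ))+1) * Gm ν E x))) x :=
        ((hasDerivAt_const x _).sub hGd).const_mul _
      have h3 : HasDerivAt F
          ((((E+1).factorial : ℕ) : ℝ)⁻¹ * (0 - -((((E:ℝ))+1) * Gm ν E x))) x := by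
        refine h2.congr_of_eventuallyEq ?_
        filter_upwards [eventually_gt_nhds hx] with y hy
        exact hFeq y hy.le
      show HasDerivAt F ((-1:ℝ) ^ 0 * ((E - 0).factorial : ℝ)⁻¹ * Gm ν (E - 0) x) x
      convert h3 using 1
      have hfs : (((E+1).factorial : ℕ) : ℝ) = ((E:ℝ)+1) * ((E.factorial : ℕ) : ℝ) := by
        rw [Nat.factorial_succ]; push_cast; ring
      have hE : (((E.factorial : ℕ)) : ℝ) ≠ 0 := Nat.cast_ne_zero.2 (Nat.factorial_ne_zero _)
      simp only [Nat.sub_zero, pow_zero, one_mul, hfs]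
      field_simp
      ring
    | succ i =>
      obtain ⟨k, hk⟩ : ∃ k, E - i = k + 1 := ⟨E - i - 1, by omega⟩
      obtain ⟨m, hm⟩ : ∃ m, k = m + 1 := ⟨k - 1, by omega⟩
      have hcont : ContinuousAt (Gm ν k) x := by
        rw [hm]; exact gm_continuousAt h0 hDint (by omega) hx
      have hki : E - (i+1) = k := by omega
      have hGd : HasDerivAt (Gm ν (k+1)) (-((((k:ℝ))+1) * Gm ν k x)) x :=
        gm_hasDerivAt h0 hDint (by omega) hx hcont
      show HasDerivAt (fun y => (-1:ℝ) ^ i * ((E - i).factorial : ℝ)⁻¹ * Gm ν (E - i) y)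
        ((-1:ℝ) ^ (i+1) * ((E - (i+1)).factorial : ℝ)⁻¹ * Gm ν (E - (i+1)) x) x
      rw [hk, hki]
      have h2 := hGd.const_mul ((-1:ℝ) ^ i * (((k+1).factorial : ℕ) : ℝ)⁻¹)
      convert h2 using 1
      case e'_4 => rfl
      case e'_5 => rfl
      have hfs : (((k+1).factorial : ℕ) : ℝ) = ((k:ℝ)+1) * ((k.factorial : ℕ) : ℝ) := by
        rw [Nat.factorial_succ]; push_cast; ring
      have hkk : (((k.factorial : ℕ)) : ℝ) ≠ 0 := Nat.cast_ne_zero.2 (Nat.factorial_ne_zero _)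
      rw [pow_succ, hfs]
      field_simp
  -- identification of rderiv with psi
  have S : ∀ j : ℕ, j ≤ E + 1 → ∀ x : ℝ, 0 ≤ x → rderiv F j x = psi F ν E j x := by
    intro j
    induction j with
    | zero => intro _ x _; rfl
    | succ i ih =>
      intro hi x hx
      have h1 : rderiv F (i+1) x = derivWithin (rderiv F i) (Set.Ici x) x := rfl
      have e : Set.EqOn (rderiv F i) (psi F ν E i) (Set.Ici x) :=
        fun y hy => ih (by omega) y (hx.trans hy)
      rw [h1, derivWithin_congr e (ih (by omega) x hx)]
      exact (key1 i (by omega) x hx).derivWithin (uniqueDiffOn_Ici x x Set.self_mem_Ici)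
  have hSD : ∀ x : ℝ, 0 ≤ x → rderiv F (E+1) x = (-1:ℝ) ^ E * Gm ν 0 x := by
    intro x hx
    have h := S (E+1) le_rfl x hx
    rw [h]
    show (-1:ℝ) ^ E * ((E - E).factorial : ℝ)⁻¹ * Gm ν (E - E) x = _
    simp [Nat.sub_self]
  have hant0 : Antitone (Gm ν 0) := gm_antitone h0 hDint (Nat.zero_le _)
  have hantD : Antitone (Gm ν (E+1)) := gm_antitone h0 hDint le_rfl
  -- MemQ for F
  have hMemQ : MemQ 0 F := by
    refine ⟨hFneg, ?_, ?_, ?_, ?_⟩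
    · intro x
      rcases lt_or_ge x 0 with hx | hx
      · exact (hFneg x hx).ge
      · rw [hFeq x hx]
        have h1 : Gm ν (E+1) x ≤ Gm ν (E+1) 0 := hantD hx
        have h2 : (0:ℝ) ≤ (((E+1).factorial : ℕ) : ℝ)⁻¹ := by positivity
        nlinarith
    · intro a ha b hb hab
      rw [hFeq a ha, hFeq b hb]
      have h := hantD hab
      have : (0:ℝ) ≤ (((E+1).factorial : ℕ) : ℝ)⁻¹ := by positivity
      nlinarith
    · intro x hx
      have hc : ContinuousWithinAt
          (fun y => (((E+1).factorial : ℕ) : ℝ)⁻¹ * (Gm ν (E+1) 0 - Gm ν (E+1) y))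
          (Set.Ici x) x :=
        continuousWithinAt_const.mul
          (continuousWithinAt_const.sub (gm_continuousWithinAt h0 hDint le_rfl hx))
      exact hc.congr (fun y hy => hFeq y (hx.trans hy)) (hFeq x hx)
    · refine ⟨max 0 ((((E+1).factorial : ℕ) : ℝ)⁻¹ * Gm ν (E+1) 0), ?_⟩
      rintro y ⟨x, rfl⟩
      rcases lt_or_ge x 0 with hx | hx
      · rw [hFneg x hx]; exact le_max_left _ _
      · refine le_trans ?_ (le_max_right _ _)
        rw [hFeq x hx]
        have h1 : (0:ℝ) ≤ (((E+1).factorial : ℕ) : ℝ)⁻¹ := by positivity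
        have h2 := gm_nonneg (ν := ν) (E+1) x
        nlinarith
  refine ⟨⟨hMemQ, ?_, ?_, ?_⟩, ?_⟩
  · -- right derivatives on [0, ∞)
    intro j hj x hx
    rw [Set.mem_Ici] at hx
    rw [S (j+1) (by omega) x hx]
    have e1 : ∀ y ∈ Set.Ici x, rderiv F j y = psi F ν E j y :=
      fun y hy => S j (by omega) y (hx.trans hy)
    exact (key1 j (by omega) x hx).congr e1 (e1 x Set.self_mem_Ici)
  · -- two-sided derivatives on (0, ∞)
    intro j hj x hx
    rw [Set.mem_Ioi] at hx
    rw [S (j+1) (by omega) x hx.le]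
    refine (key2 j (by omega) x hx).congr_of_eventuallyEq ?_
    filter_upwards [eventually_gt_nhds hx] with y hy
    exact S j (by omega) y hy.le
  · -- monotonicity of the D-th right derivative
    rcases Nat.even_or_odd E with he | he
    · right
      intro a ha b hb hab
      rw [hSD a ha, hSD b hb, he.neg_one_pow, one_mul, one_mul]
      exact hant0 hab
    · left
      intro a ha b hb hab
      rw [hSD a ha, hSD b hb, he.neg_one_pow, neg_one_mul, neg_one_mul]
      exact neg_le_neg (hant0 hab)
  · -- the two closed-form identities
    intro x hx
    have hGx : Gm ν 0 x = l - Q x := hG0 x hx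
    have hG00 : Gm ν 0 0 = l - Q 0 := hG0 0 le_rfl
    constructor
    · rw [hSD x hx, hνIoi x hx, ENNReal.toReal_ofReal (sub_nonneg.2 (hQle x)), ← hGx]
      have hsign : (-1:ℝ) ^ (E+1+1) * (-1:ℝ) ^ E = 1 := by
        rw [← pow_add]
        exact Even.neg_one_pow ⟨E+1, by ring⟩
      linear_combination Gm ν 0 x * hsign
    · rw [hSD x hx, hSD 0 le_rfl, hGx, hG00, hQ0]
      have hsign : (-1:ℝ) ^ (E+1) * (-1:ℝ) ^ E = -1 := by
        rw [← pow_add]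
        exact Odd.neg_one_pow ⟨E, by ring⟩
      linear_combination (-(Q x)) * hsign
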